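/- Let g : ℝ → ℝ be twice continuously differentiable and 1-periodic, let T > 0, t > 0, let (h_n) be a bounded real sequence, and set T_n := T + h_n · n^{-3/2}. Then ∫₀^{tn} ( g(s/T_n) − g(s/T) + (T_n − T) · (s/T²) · g'(s/T) )² ds → 0 as n → ∞. -/

import Mathlib

open MeasureTheory Filter

/-- A continuous 1-periodic function is bounded. -/
lemma periodic_bound_aux {f : ℝ → ℝ} (hf : Continuous f) (hp : Function.Periodic f 1) :
    ∃ M : ℝ, 0 ≤ M ∧ ∀ x, |f x| ≤ M := by
  obtain ⟨M, hM⟩ := (isCompact_Icc (a := (0:ℝ)) (b := 1)).exists_bound_of_continuousOn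
    hf.continuousOn
  refine ⟨M, le_trans (norm_nonneg _) (hM 0 (by norm_num)), fun x => ?_⟩
  have h1 : f (Int.fract x) = f x := by
    rw [Int.fract]
    simpa using hp.sub_int_mul_eq (x := x) ⌊x⌋
  calc |f x| = ‖f (Int.fract x)‖ := by rw [h1]; simp [Real.norm_eq_abs]
    _ ≤ M := hM _ ⟨Int.fract_nonneg x, (Int.fract_lt_one x).le⟩

/-- The derivative of a 1-periodic function is 1-periodic. -/
lemma periodic_deriv_aux {f : ℝ → ℝ} (hp : Function.Periodic f 1) :
    Function.Periodic (deriv f) 1 := by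
  intro x
  have : (fun y => f (y + 1)) = f := funext fun y => hp y
  calc deriv f (x + 1) = deriv (fun y => f (y + 1)) x := (deriv_comp_add_const f 1 x).symm
    _ = deriv f x := by rw [this]

set_option maxHeartbeats 1000000 in
theorem remainder_Cn_tendsto_zero
    (g : ℝ → ℝ) (hg : ContDiff ℝ 2 g) (hper : Function.Periodic g 1)
    (T t : ℝ) (hT : 0 < T) (ht : 0 < t)
    (h : ℕ → ℝ) (hbdd : ∃ C : ℝ, ∀ n, |h n| ≤ C)
    (Tn : ℕ → ℝ) (hTn : ∀ n, Tn n = T + h n * (n : ℝ) ^ (-(3 / 2) : ℝ)) :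
    Tendsto
      (fun n : ℕ =>
        ∫ s in (0:ℝ)..(t * n),
          (g (s / Tn n) - g (s / T) + (Tn n - T) * (s / T ^ 2) * deriv g (s / T)) ^ 2)
      atTop (nhds 0) := by
  obtain ⟨C, hC⟩ := hbdd
  have hC0 : 0 ≤ C := le_trans (abs_nonneg _) (hC 0)
  -- smoothness facts
  have hg1 : ContDiff ℝ 1 (deriv g) := by
    have : ContDiff ℝ (1 + 1) g := by norm_num; exact hg
    exact (contDiff_succ_iff_deriv.mp this).2.2
  have hgc : Continuous (deriv g) := hg1.continuous
  have hgc2 : Continuous (deriv (deriv g)) := by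
    have h01 : ContDiff ℝ (0 + 1) (deriv g) := by norm_num; exact hg1
    exact (contDiff_succ_iff_deriv.mp h01).2.2.continuous
  have hgdiff : Differentiable ℝ g := hg.differentiable (by norm_num)
  have hg1diff : Differentiable ℝ (deriv g) := hg1.differentiable (by norm_num)
  -- bounds on the derivatives
  obtain ⟨M1, hM10, hM1⟩ := periodic_bound_aux hgc (periodic_deriv_aux hper)
  obtain ⟨M2, hM20, hM2⟩ := periodic_bound_aux hgc2
    (periodic_deriv_aux (periodic_deriv_aux hper))
  set K : ℝ := M2 * t ^ 2 / (T / 2) ^ 4 + 2 * M1 * t / (T / 2) ^ 3 with hK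
  have hK0 : 0 ≤ K := by positivity
  have hdelta : ∀ n : ℕ, |Tn n - T| ≤ C * (n : ℝ) ^ (-(3 / 2) : ℝ) := by
    intro n
    have hw : (0:ℝ) ≤ (n : ℝ) ^ (-(3 / 2) : ℝ) := Real.rpow_nonneg n.cast_nonneg _
    rw [hTn n, add_sub_cancel_left, abs_mul, abs_of_nonneg hw]
    exact mul_le_mul_of_nonneg_right (hC n) hw
  -- the key pointwise estimate
  have key : ∀ n : ℕ, 1 ≤ n → |Tn n - T| ≤ T / 2 → ∀ s : ℝ, 0 ≤ s → s ≤ t * n →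
      |g (s / Tn n) - g (s / T) + (Tn n - T) * (s / T ^ 2) * deriv g (s / T)|
        ≤ K * (n : ℝ) ^ 2 * (Tn n - T) ^ 2 := by
    intro n hn1 hsmall s hs0 hsle
    set τ := Tn n with hτ
    have hτT := abs_le.mp hsmall
    have hτpos : 0 < τ := by linarith
    set D : Set ℝ := Set.Icc (T / 2) (T + T / 2) with hD
    have hTD : T ∈ D := ⟨by linarith, by linarith⟩
    have hτD : τ ∈ D := ⟨by linarith, by linarith⟩
    have hDpos : ∀ x ∈ D, 0 < x := fun x hx => lt_of_lt_of_le (by linarith) hx.1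
    have hn0 : (0:ℝ) < (n : ℝ) := by exact_mod_cast hn1
    set E : ℝ → ℝ := fun x => g (s / x) - g (s / T) + (x - T) * (s / T ^ 2) * deriv g (s / T)
      with hE
    set F : ℝ → ℝ := fun x => deriv g (s / x) * (-(s / x ^ 2)) + s / T ^ 2 * deriv g (s / T)
      with hF
    set G : ℝ → ℝ := fun x =>
      deriv (deriv g) (s / x) * (-(s / x ^ 2)) * (-(s / x ^ 2)) + deriv g (s / x) * (2 * s / x ^ 3)
      with hG
    -- derivative of x ↦ s / x
    have hder1 : ∀ x : ℝ, 0 < x → HasDerivAt (fun y => s / y) (-(s / x ^ 2)) x := by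
      intro x hx
      have := (hasDerivAt_inv hx.ne').const_mul s
      refine this.congr_deriv ?_
      rw [mul_neg, ← div_eq_mul_inv]
    have hderE : ∀ x ∈ D, HasDerivAt E (F x) x := by
      intro x hx
      have hxpos := hDpos x hx
      have h3 := ((hgdiff (s / x)).hasDerivAt).comp x (hder1 x hxpos)
      have h4 : HasDerivAt (fun y => (y - T) * (s / T ^ 2) * deriv g (s / T))
          (s / T ^ 2 * deriv g (s / T)) x := by
        simpa using (((hasDerivAt_id x).sub_const T).mul_const (s / T ^ 2)).mul_const
          (deriv g (s / T))
      exact (h3.sub_const (g (s / T))).add h4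
    have hderF : ∀ x ∈ D, HasDerivAt F (G x) x := by
      intro x hx
      have hxpos := hDpos x hx
      have h3 := ((hg1diff (s / x)).hasDerivAt).comp x (hder1 x hxpos)
      have h5 : HasDerivAt (fun y => -(s / y ^ 2)) (2 * s / x ^ 3) x := by
        have hx2 : (x:ℝ) ^ 2 ≠ 0 := pow_ne_zero 2 hxpos.ne'
        have hxne : x ≠ 0 := hxpos.ne'
        have := (((hasDerivAt_pow 2 x).inv hx2).const_mul s).neg
        refine this.congr_deriv ?_
        field_simp
        ring
      have h6 := h3.mul h5
      have h7 := h6.add_const (s / T ^ 2 * deriv g (s / T))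
      exact h7
    -- bound on G over D
    have hGb : ∀ x ∈ D, |G x| ≤ K * (n : ℝ) ^ 2 := by
      intro x hx
      have hxpos := hDpos x hx
      have hxge : T / 2 ≤ x := hx.1
      have hT2 : (0:ℝ) < T / 2 := by linarith
      have hw2 : s / x ^ 2 ≤ t * n / (T / 2) ^ 2 :=
        div_le_div₀ (by positivity) hsle (by positivity)
          (pow_le_pow_left₀ hT2.le hxge 2)
      have hw3 : s / x ^ 3 ≤ t * n / (T / 2) ^ 3 :=
        div_le_div₀ (by positivity) hsle (by positivity)
          (pow_le_pow_left₀ hT2.le hxge 3)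
      have hw2' : 0 ≤ s / x ^ 2 := by positivity
      have hw3' : 0 ≤ s / x ^ 3 := by positivity
      have hGeq : G x = deriv (deriv g) (s / x) * (s / x ^ 2) ^ 2
          + deriv g (s / x) * (2 * (s / x ^ 3)) := by
        rw [hG]; ring
      have habs : |G x| ≤ M2 * (s / x ^ 2) ^ 2 + M1 * (2 * (s / x ^ 3)) := by
        rw [hGeq]
        refine (abs_add_le _ _).trans (add_le_add ?_ ?_)
        · rw [abs_mul, abs_of_nonneg (by positivity : (0:ℝ) ≤ (s / x ^ 2) ^ 2)]
          exact mul_le_mul_of_nonneg_right (hM2 _) (by positivity)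
        · rw [abs_mul, abs_of_nonneg (by positivity : (0:ℝ) ≤ 2 * (s / x ^ 3))]
          exact mul_le_mul_of_nonneg_right (hM1 _) (by positivity)
      refine habs.trans ?_
      have hstep : M2 * (s / x ^ 2) ^ 2 + M1 * (2 * (s / x ^ 3))
          ≤ M2 * (t * n / (T / 2) ^ 2) ^ 2 + M1 * (2 * (t * n / (T / 2) ^ 3)) := by
        gcongr
      refine hstep.trans ?_
      have heq2 : M2 * (t * n / (T / 2) ^ 2) ^ 2 + M1 * (2 * (t * n / (T / 2) ^ 3))
          = M2 * t ^ 2 / (T / 2) ^ 4 * (n : ℝ) ^ 2 + 2 * M1 * t / (T / 2) ^ 3 * (n : ℝ) := by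
        field_simp
      rw [heq2, hK, add_mul]
      have hnn : (n : ℝ) ≤ (n : ℝ) ^ 2 := by
        nlinarith [(by exact_mod_cast hn1 : (1:ℝ) ≤ (n : ℝ))]
      exact add_le_add le_rfl (mul_le_mul_of_nonneg_left hnn (by positivity))
    -- first mean value estimate : |F x| ≤ K n² |x - T|
    have hFT : F T = 0 := by rw [hF]; ring
    have hFb : ∀ x ∈ D, |F x| ≤ K * (n : ℝ) ^ 2 * |x - T| := by
      intro x hx
      have := (convex_Icc (T / 2) (T + T / 2)).norm_image_sub_le_of_norm_hasDerivWithin_le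
        (f := F) (f' := G) (fun y hy => (hderF y hy).hasDerivWithinAt)
        (fun y hy => by simpa [Real.norm_eq_abs] using hGb y hy) hTD hx
      simpa [hFT, Real.norm_eq_abs] using this
    -- second mean value estimate on the segment [T, τ]
    have hsub : Set.uIcc T τ ⊆ D :=
      (convex_Icc (T / 2) (T + T / 2)).ordConnected.uIcc_subset hTD hτD
    have hconv : Convex ℝ (Set.uIcc T τ) := by
      rw [Set.uIcc]; exact convex_Icc _ _
    have hET : E T = 0 := by rw [hE]; ring
    have hEb := hconv.norm_image_sub_le_of_norm_hasDerivWithin_le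
      (f := E) (f' := F)
      (fun y hy => ((hderE y (hsub hy)).hasDerivWithinAt))
      (C := K * (n : ℝ) ^ 2 * |τ - T|)
      (fun y hy => by
        have h1 := hFb y (hsub hy)
        have h2 : |y - T| ≤ |τ - T| := Set.abs_sub_left_of_mem_uIcc hy
        calc ‖F y‖ = |F y| := Real.norm_eq_abs _
          _ ≤ K * (n : ℝ) ^ 2 * |y - T| := h1
          _ ≤ K * (n : ℝ) ^ 2 * |τ - T| := by
              exact mul_le_mul_of_nonneg_left h2 (by positivity))
      Set.left_mem_uIcc Set.right_mem_uIcc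
    have : |E τ| ≤ K * (n : ℝ) ^ 2 * |τ - T| * |τ - T| := by
      simpa [hET, Real.norm_eq_abs] using hEb
    calc |E τ| ≤ K * (n : ℝ) ^ 2 * |τ - T| * |τ - T| := this
      _ = K * (n : ℝ) ^ 2 * (τ - T) ^ 2 := by rw [mul_assoc, ← abs_mul, ← sq, abs_sq]
  -- eventual bound on the integral
  set b : ℕ → ℝ := fun n => (K * C ^ 2) ^ 2 * t / n with hb
  have hbt : Tendsto b atTop (nhds 0) := tendsto_const_div_atTop_nhds_zero_nat _
  refine squeeze_zero_norm' ?_ hbt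
  -- eventually |Tn n - T| ≤ T/2 and 1 ≤ n
  have hto : Tendsto (fun n : ℕ => C * (n : ℝ) ^ (-(3 / 2) : ℝ)) atTop (nhds 0) := by
    have h1 : Tendsto (fun n : ℕ => ((n : ℝ)) ^ (-(3 / 2) : ℝ)) atTop (nhds 0) :=
      (tendsto_rpow_neg_atTop (by norm_num : (0:ℝ) < 3 / 2)).comp
        tendsto_natCast_atTop_atTop
    simpa using h1.const_mul C
  have hev : ∀ᶠ n : ℕ in atTop, C * (n : ℝ) ^ (-(3 / 2) : ℝ) ≤ T / 2 := by
    filter_upwards [hto.eventually (ge_mem_nhds (by linarith : (0:ℝ) < T / 2))] with n hn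
    exact hn
  filter_upwards [hev, eventually_ge_atTop 1] with n hnev hn1
  have hn0 : (0:ℝ) < (n : ℝ) := by exact_mod_cast hn1
  have hsmall : |Tn n - T| ≤ T / 2 := (hdelta n).trans hnev
  -- pointwise bound for the integrand
  have hpow : K * (n : ℝ) ^ 2 * (Tn n - T) ^ 2 ≤ K * C ^ 2 / n := by
    have h1 : (Tn n - T) ^ 2 ≤ (C * (n : ℝ) ^ (-(3 / 2) : ℝ)) ^ 2 := by
      rw [← sq_abs (Tn n - T)]
      exact pow_le_pow_left₀ (abs_nonneg _) (hdelta n) 2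
    have h2 : ((n : ℝ)) ^ (2:ℕ) * (((n : ℝ)) ^ (-(3 / 2) : ℝ)) ^ (2:ℕ) = ((n : ℝ))⁻¹ := by
      have ha : ((n : ℝ) ^ (-(3 / 2) : ℝ)) ^ (2:ℕ) = (n : ℝ) ^ ((-3 : ℝ)) := by
        rw [← Real.rpow_natCast ((n : ℝ) ^ (-(3 / 2) : ℝ)) 2, ← Real.rpow_mul n.cast_nonneg]
        norm_num
      rw [ha, ← Real.rpow_natCast (n : ℝ) 2, ← Real.rpow_add hn0]
      norm_num
      exact Real.rpow_neg_one _
    calc K * (n : ℝ) ^ 2 * (Tn n - T) ^ 2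
        ≤ K * (n : ℝ) ^ 2 * (C * (n : ℝ) ^ (-(3 / 2) : ℝ)) ^ 2 := by
          exact mul_le_mul_of_nonneg_left h1 (by positivity)
      _ = K * C ^ 2 * ((n : ℝ) ^ (2:ℕ) * ((n : ℝ) ^ (-(3 / 2) : ℝ)) ^ (2:ℕ)) := by ring
      _ = K * C ^ 2 / n := by rw [h2, div_eq_mul_inv]
  have hbound : ∀ s ∈ Set.uIoc (0:ℝ) (t * n),
      ‖(g (s / Tn n) - g (s / T) + (Tn n - T) * (s / T ^ 2) * deriv g (s / T)) ^ 2‖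
        ≤ (K * C ^ 2 / n) ^ 2 := by
    intro s hs
    rw [Set.uIoc_of_le (by positivity : (0:ℝ) ≤ t * n)] at hs
    have h1 := (key n hn1 hsmall s hs.1.le hs.2).trans hpow
    rw [Real.norm_eq_abs, abs_pow]
    exact pow_le_pow_left₀ (abs_nonneg _) h1 2
  have hint := intervalIntegral.norm_integral_le_of_norm_le_const hbound
  have heqf : (K * C ^ 2 / n) ^ 2 * |t * (n : ℝ) - 0| = (K * C ^ 2) ^ 2 * t / n := by
    rw [sub_zero, abs_of_nonneg (by positivity : (0:ℝ) ≤ t * (n : ℝ))]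
    field_simp
  show ‖∫ s in (0:ℝ)..(t * n),
      (g (s / Tn n) - g (s / T) + (Tn n - T) * (s / T ^ 2) * deriv g (s / T)) ^ 2‖
    ≤ (K * C ^ 2) ^ 2 * t / n
  exact le_of_le_of_eq hint heqf
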